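/- Let p₁ and p₂ be distinct primes, n = p₁p₂, and let m ≥ 1 divide both p₁ − 1 and p₂ − 1. If ω ∈ ℤ_n = ℤ/nℤ is an element whose image in ℤ/p₁ℤ has multiplicative order m and whose image in ℤ/p₂ℤ has multiplicative order m, then ω is a primitive m-th root of unity in ℤ_n in the halidon sense: m is the least positive integer with ω^m = 1, and for every integer k, Σ_{r=0}^{m-1} ω^{rk} = m when m ∣ k and = 0 otherwise. -/

import Mathlib

open scoped BigOperators

/-- `ω` is a primitive `m`-th root of unity in the halidon sense: `m` is the least
positive integer with `ω ^ m = 1`, and for every integer `k`,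
`∑_{r=0}^{m-1} ω ^ (r k) = m` if `m ∣ k` and `= 0` otherwise. (Since `ω ^ m = 1`, it
suffices to quantify over natural number exponents `k`.) -/
def IsHalidonPrimitiveRoot {R : Type*} [CommRing R] (m : ℕ) (ω : R) : Prop :=
  0 < m ∧ ω ^ m = 1 ∧ (∀ k : ℕ, 0 < k → ω ^ k = 1 → m ≤ k) ∧
    ∀ k : ℕ, (∑ r ∈ Finset.range m, ω ^ (r * k)) = if m ∣ k then (m : R) else 0

/-- Geometric-sum evaluation in a field for an element of multiplicative order `m`. -/
lemma field_sum_of_orderOf {F : Type*} [Field F] {m : ℕ} (hm : 0 < m) (x : F)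
    (hx : orderOf x = m) (k : ℕ) :
    (∑ r ∈ Finset.range m, x ^ (r * k)) = if m ∣ k then (m : F) else 0 := by
  have hxm : x ^ m = 1 := hx ▸ pow_orderOf_eq_one x
  by_cases h : m ∣ k
  · have hxk : x ^ k = 1 := by
      rw [← hx] at h; exact orderOf_dvd_iff_pow_eq_one.mp h
    rw [if_pos h]
    have : ∀ r ∈ Finset.range m, x ^ (r * k) = 1 := by
      intro r _
      rw [mul_comm, pow_mul, hxk, one_pow]
    rw [Finset.sum_congr rfl this]
    simp
  · rw [if_neg h]
    have hxk : x ^ k ≠ 1 := by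
      rw [← hx] at h
      exact fun hc => h (orderOf_dvd_iff_pow_eq_one.mpr hc)
    have key : (x ^ k - 1) * (∑ r ∈ Finset.range m, (x ^ k) ^ r) = (x ^ k) ^ m - 1 := by
      rw [mul_comm]; exact geom_sum_mul (x ^ k) m
    have h2 : (x ^ k) ^ m = 1 := by
      rw [← pow_mul, mul_comm, pow_mul, hxm, one_pow]
    rw [h2, sub_self] at key
    have hne : x ^ k - 1 ≠ 0 := sub_ne_zero.mpr hxk
    have := (mul_eq_zero.mp key).resolve_left hne
    calc (∑ r ∈ Finset.range m, x ^ (r * k)) = ∑ r ∈ Finset.range m, (x ^ k) ^ r := by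
          refine Finset.sum_congr rfl fun r _ => ?_
          rw [← pow_mul, mul_comm]
      _ = 0 := this

/-- Let `p₁, p₂` be distinct primes, `n = p₁ p₂`, and let `m ≥ 1`
divide both `p₁ − 1` and `p₂ − 1`. If `ω ∈ ℤ/nℤ` has image of multiplicative order `m`
in `ℤ/p₁ℤ` and image of multiplicative order `m` in `ℤ/p₂ℤ`, then `ω` is a primitive
`m`-th root of unity of `ℤ/nℤ` in the halidon sense. -/
theorem halidon_root_of_orders (p₁ p₂ : ℕ) (hp₁ : p₁.Prime) (hp₂ : p₂.Prime)
    (hne : p₁ ≠ p₂) (m : ℕ) (hm : 1 ≤ m)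
    (hm₁ : m ∣ p₁ - 1) (hm₂ : m ∣ p₂ - 1)
    (ω : ZMod (p₁ * p₂))
    (h₁ : orderOf (ZMod.castHom (dvd_mul_right p₁ p₂) (ZMod p₁) ω) = m)
    (h₂ : orderOf (ZMod.castHom (dvd_mul_left p₂ p₁) (ZMod p₂) ω) = m) :
    IsHalidonPrimitiveRoot m ω := by
  haveI : Fact p₁.Prime := ⟨hp₁⟩
  haveI : Fact p₂.Prime := ⟨hp₂⟩
  have hcop : Nat.Coprime p₁ p₂ := (Nat.coprime_primes hp₁ hp₂).mpr hne
  set f₁ := ZMod.castHom (dvd_mul_right p₁ p₂) (ZMod p₁)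
  set f₂ := ZMod.castHom (dvd_mul_left p₂ p₁) (ZMod p₂)
  have hinj : ∀ x y : ZMod (p₁ * p₂), f₁ x = f₁ y → f₂ x = f₂ y → x = y := by
    intro x y e1 e2
    have := (ZMod.chineseRemainder hcop).injective (a₁ := x) (a₂ := y) ?_
    · exact this
    · apply Prod.ext
      · simpa [f₁, ZMod.chineseRemainder, ZMod.castHom_apply, Prod.fst_zmod_cast] using e1
      · simpa [f₂, ZMod.chineseRemainder, ZMod.castHom_apply, Prod.snd_zmod_cast] using e2
  have hm0 : 0 < m := hm
  have hpow : ω ^ m = 1 := by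
    apply hinj
    · rw [map_pow, map_one]; exact h₁ ▸ pow_orderOf_eq_one (f₁ ω)
    · rw [map_pow, map_one]; exact h₂ ▸ pow_orderOf_eq_one (f₂ ω)
  refine ⟨hm0, hpow, ?_, ?_⟩
  · intro k hk hωk
    have : f₁ ω ^ k = 1 := by rw [← map_pow, hωk, map_one]
    have hd : m ∣ k := h₁ ▸ orderOf_dvd_iff_pow_eq_one.mpr this
    exact Nat.le_of_dvd hk hd
  · intro k
    apply hinj
    · rw [map_sum, apply_ite f₁, map_natCast, map_zero]
      simp only [map_pow]
      exact field_sum_of_orderOf hm0 (f₁ ω) h₁ k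
    · rw [map_sum, apply_ite f₂, map_natCast, map_zero]
      simp only [map_pow]
      exact field_sum_of_orderOf hm0 (f₂ ω) h₂ k
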